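/- Let X be an n-element set, let H be the graph on the power set of X where two subsets are adjacent iff they are disjoint, and let A be a family of subsets of X with |A| = m = 2^{(δ + 1/(k+1))n} for some δ > 0. Then the homomorphism density of the t-fold blow-up of the complete graph K_{k+1} in the induced subgraph H[A] is at most (k+1)·2^{-n(δt − 1)}. -/

import Mathlib

open Finset

-- step C: number of t-tuples with small union
lemma lemC (n k t : ℕ) :
    ((Finset.univ.filter (fun g : Fin t → Finset (Fin n) =>
        (k+1) * (Finset.univ.biUnion g).card ≤ n)).card : ℕ)
      ≤ 2^n * (2^(n/(k+1)))^t := by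
  classical
  have hsub : (Finset.univ.filter (fun g : Fin t → Finset (Fin n) =>
        (k+1) * (Finset.univ.biUnion g).card ≤ n))
      ⊆ (Finset.univ.filter (fun S : Finset (Fin n) => (k+1) * S.card ≤ n)).biUnion
          (fun S => Fintype.piFinset (fun _ : Fin t => S.powerset)) := by
    intro g hg
    simp only [mem_filter, mem_univ, true_and] at hg
    refine mem_biUnion.2 ⟨Finset.univ.biUnion g, ?_, ?_⟩
    · simp [hg]
    · refine Fintype.mem_piFinset.2 fun j => ?_
      exact mem_powerset.2 (subset_biUnion_of_mem g (mem_univ j))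
  calc _ ≤ _ := Finset.card_le_card hsub
    _ ≤ ∑ S ∈ Finset.univ.filter (fun S : Finset (Fin n) => (k+1) * S.card ≤ n),
          (Fintype.piFinset (fun _ : Fin t => S.powerset)).card := Finset.card_biUnion_le
    _ ≤ ∑ S ∈ Finset.univ.filter (fun S : Finset (Fin n) => (k+1) * S.card ≤ n),
          (2^(n/(k+1)))^t := by
        refine Finset.sum_le_sum fun S hS => ?_
        simp only [mem_filter, mem_univ, true_and] at hS
        have h1 : S.card ≤ n / (k+1) := Nat.le_div_iff_mul_le (Nat.succ_pos k) |>.2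
          (by rw [mul_comm]; exact hS)
        rw [Fintype.card_piFinset]
        calc ∏ _j : Fin t, S.powerset.card = (2^S.card)^t := by
              simp [Finset.card_powerset, Finset.prod_const]
          _ ≤ (2^(n/(k+1)))^t := Nat.pow_le_pow_left (Nat.pow_le_pow_right (by norm_num) h1) t
    _ ≤ 2^n * (2^(n/(k+1)))^t := by
        rw [Finset.sum_const, smul_eq_mul]
        have : (Finset.univ.filter (fun S : Finset (Fin n) => (k+1) * S.card ≤ n)).card ≤ 2^n := by
          calc _ ≤ (Finset.univ : Finset (Finset (Fin n))).card := Finset.card_le_card (filter_subset _ _)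
            _ = 2^n := by simp
        exact Nat.mul_le_mul_right _ this


lemma lemB (n k t : ℕ) (A : Finset (Finset (Fin n))) (i : Fin (k+1)) :
    (Finset.univ.filter (fun φ : Fin (k + 1) × Fin t → {x // x ∈ A} =>
        (k+1) * (Finset.univ.biUnion (fun j : Fin t => (φ (i, j) : Finset (Fin n)))).card ≤ n)).card
      ≤ (Finset.univ.filter (fun g : Fin t → Finset (Fin n) =>
          (k+1) * (Finset.univ.biUnion g).card ≤ n)).card * A.card ^ (k * t) := by
  classical
  rw [← Fintype.card_subtype]
  have hcard2 : Fintype.card {u : Fin (k+1) × Fin t // u.1 ≠ i} = k * t := by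
    have e : {u : Fin (k+1) × Fin t // u.1 ≠ i} ≃ {a : Fin (k+1) // a ≠ i} × Fin t :=
      { toFun := fun u => (⟨u.1.1, u.2⟩, u.1.2)
        invFun := fun p => ⟨(p.1.1, p.2), p.1.2⟩
        left_inv := fun u => rfl
        right_inv := fun p => rfl }
    rw [Fintype.card_congr e, Fintype.card_prod, Fintype.card_fin]
    have : Fintype.card {a : Fin (k+1) // a ≠ i} = k := by
      simp [Fintype.card_subtype, Finset.filter_ne']
    rw [this]
  have key : Fintype.card {φ : Fin (k + 1) × Fin t → {x // x ∈ A} //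
        (k+1) * (Finset.univ.biUnion (fun j : Fin t => (φ (i, j) : Finset (Fin n)))).card ≤ n}
      ≤ Fintype.card ({g : Fin t → Finset (Fin n) //
          (k+1) * (Finset.univ.biUnion g).card ≤ n} ×
          ({u : Fin (k+1) × Fin t // u.1 ≠ i} → {x // x ∈ A})) := by
    apply Fintype.card_le_of_injective
      (fun φ => (⟨fun j => (φ.1 (i, j) : Finset (Fin n)), φ.2⟩, fun u => φ.1 u.1))
    intro φ₁ φ₂ h
    simp only [Prod.mk.injEq, Subtype.mk.injEq] at h
    obtain ⟨h1, h2⟩ := h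
    refine Subtype.ext (funext fun u => ?_)
    by_cases hu : u.1 = i
    · have hu' : u = (i, u.2) := by rw [← hu]
      rw [hu']
      exact Subtype.ext (congrFun h1 u.2)
    · exact congrFun h2 ⟨u, hu⟩
  calc _ ≤ _ := key
    _ = _ := by
      rw [Fintype.card_prod, Fintype.card_subtype, Fintype.card_fun, hcard2,
        Fintype.card_coe]


lemma lemA (n k t : ℕ) (A : Finset (Finset (Fin n))) :
    Nat.card {φ : Fin (k + 1) × Fin t → {x // x ∈ A} //
        ∀ u v : Fin (k + 1) × Fin t, u.1 ≠ v.1 →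
          ((φ u : Finset (Fin n)) ≠ (φ v : Finset (Fin n)) ∧
            Disjoint (φ u : Finset (Fin n)) (φ v : Finset (Fin n)))}
      ≤ (k+1) * ((Finset.univ.filter (fun g : Fin t → Finset (Fin n) =>
          (k+1) * (Finset.univ.biUnion g).card ≤ n)).card * A.card ^ (k * t)) := by
  classical
  rw [Nat.card_eq_fintype_card, Fintype.card_subtype]
  have hsub : (Finset.univ.filter (fun φ : Fin (k + 1) × Fin t → {x // x ∈ A} =>
        ∀ u v : Fin (k + 1) × Fin t, u.1 ≠ v.1 →
          ((φ u : Finset (Fin n)) ≠ (φ v : Finset (Fin n)) ∧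
            Disjoint (φ u : Finset (Fin n)) (φ v : Finset (Fin n)))))
      ⊆ (Finset.univ : Finset (Fin (k+1))).biUnion (fun i =>
          Finset.univ.filter (fun φ : Fin (k + 1) × Fin t → {x // x ∈ A} =>
            (k+1) * (Finset.univ.biUnion
              (fun j : Fin t => (φ (i, j) : Finset (Fin n)))).card ≤ n)) := by
    intro φ hφ
    simp only [mem_filter, mem_univ, true_and] at hφ
    set S : Fin (k+1) → Finset (Fin n) :=
      fun i => Finset.univ.biUnion (fun j : Fin t => (φ (i, j) : Finset (Fin n))) with hS
    have hdis : ∀ i i' : Fin (k+1), i ≠ i' → Disjoint (S i) (S i') := by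
      intro i i' hne
      rw [Finset.disjoint_left]
      intro x hx hx'
      obtain ⟨j, -, hj⟩ := mem_biUnion.1 hx
      obtain ⟨j', -, hj'⟩ := mem_biUnion.1 hx'
      exact (Finset.disjoint_left.1 ((hφ (i, j) (i', j') hne).2)) hj hj'
    have hsum : ∑ i : Fin (k+1), (S i).card ≤ n := by
      rw [← Finset.card_biUnion (fun i _ i' _ h => hdis i i' h)]
      calc _ ≤ (Finset.univ : Finset (Fin n)).card := Finset.card_le_card (subset_univ _)
        _ = n := by simp
    obtain ⟨i₀, -, hmin⟩ := Finset.exists_min_image Finset.univ (fun i => (S i).card)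
      ⟨0, mem_univ 0⟩
    have hkey : (k+1) * (S i₀).card ≤ n := by
      have := Finset.card_nsmul_le_sum Finset.univ (fun i => (S i).card) ((S i₀).card)
        (fun i _ => hmin i (mem_univ i))
      simpa using this.trans hsum
    exact mem_biUnion.2 ⟨i₀, mem_univ i₀, by simp [hkey]; exact hkey⟩
  calc _ ≤ _ := Finset.card_le_card hsub
    _ ≤ ∑ i : Fin (k+1), (Finset.univ.filter (fun φ : Fin (k + 1) × Fin t → {x // x ∈ A} =>
            (k+1) * (Finset.univ.biUnion
              (fun j : Fin t => (φ (i, j) : Finset (Fin n)))).card ≤ n)).card :=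
        Finset.card_biUnion_le
    _ ≤ ∑ _i : Fin (k+1), (Finset.univ.filter (fun g : Fin t → Finset (Fin n) =>
          (k+1) * (Finset.univ.biUnion g).card ≤ n)).card * A.card ^ (k * t) :=
        Finset.sum_le_sum (fun i _ => lemB n k t A i)
    _ = _ := by simp [mul_comm]



/-- homomorphism density of K_{k+1}⊗t in the induced disjointness
graph on A is at most (k+1)·2^{-n(δt−1)}, when |A| = 2^{(δ+1/(k+1))n}. -/
theorem stmt6 (n k t : ℕ) (δ : ℝ) (hδ : 0 < δ) (A : Finset (Finset (Fin n)))
    (hm : (A.card : ℝ) = (2 : ℝ) ^ ((δ + 1 / ((k : ℝ) + 1)) * n)) :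
    (Nat.card {φ : Fin (k + 1) × Fin t → {x // x ∈ A} //
        ∀ u v : Fin (k + 1) × Fin t, u.1 ≠ v.1 →
          ((φ u : Finset (Fin n)) ≠ (φ v : Finset (Fin n)) ∧
            Disjoint (φ u : Finset (Fin n)) (φ v : Finset (Fin n)))} : ℝ)
        / (A.card : ℝ) ^ ((k + 1) * t)
      ≤ ((k : ℝ) + 1) * (2 : ℝ) ^ (-((n : ℝ) * (δ * t - 1))) := by
  classical
  set q : ℕ := n / (k+1) with hqdef
  set x : ℝ := (δ + 1 / ((k : ℝ) + 1)) * n with hxdef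
  have hmpos : (0:ℝ) < (A.card : ℝ) := hm ▸ Real.rpow_pos_of_pos two_pos _
  have hnat : Nat.card {φ : Fin (k + 1) × Fin t → {x // x ∈ A} //
        ∀ u v : Fin (k + 1) × Fin t, u.1 ≠ v.1 →
          ((φ u : Finset (Fin n)) ≠ (φ v : Finset (Fin n)) ∧
            Disjoint (φ u : Finset (Fin n)) (φ v : Finset (Fin n)))}
      ≤ (k+1) * (2^n * (2^q)^t * A.card^(k*t)) := by
    refine (lemA n k t A).trans ?_
    exact Nat.mul_le_mul_left _ (Nat.mul_le_mul_right _ (lemC n k t))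
  have h2 : (0:ℝ) ≤ 2 := by norm_num
  have e1 : ((2:ℝ)^(n:ℕ)) = (2:ℝ)^((n:ℝ)) := (Real.rpow_natCast 2 n).symm
  have e2 : (((2:ℝ)^(q:ℕ)))^(t:ℕ) = (2:ℝ)^(((q:ℕ):ℝ)*(t:ℕ)) := by
    rw [← Real.rpow_natCast ((2:ℝ)^(q:ℕ)) t, ← Real.rpow_natCast 2 q, ← Real.rpow_mul h2]
  have e3 : ∀ c : ℕ, (A.card:ℝ)^(c:ℕ) = (2:ℝ)^(x*c) := by
    intro c
    rw [hm, ← Real.rpow_natCast ((2:ℝ)^x) c, ← Real.rpow_mul h2]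
  rw [div_le_iff₀ (by positivity)]
  have hq : ((q:ℕ):ℝ) ≤ (n:ℝ)/((k:ℝ)+1) := by
    have := Nat.cast_div_le (α := ℝ) (m := n) (n := k+1)
    push_cast at this
    simpa using this
  calc (Nat.card {φ : Fin (k + 1) × Fin t → {x // x ∈ A} //
        ∀ u v : Fin (k + 1) × Fin t, u.1 ≠ v.1 →
          ((φ u : Finset (Fin n)) ≠ (φ v : Finset (Fin n)) ∧
            Disjoint (φ u : Finset (Fin n)) (φ v : Finset (Fin n)))} : ℝ)
      ≤ ((k:ℝ)+1) * ((2:ℝ)^(n:ℕ) * ((2:ℝ)^(q:ℕ))^(t:ℕ) * (A.card:ℝ)^(k*t)) := by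
        exact_mod_cast hnat
    _ = ((k:ℝ)+1) * (2:ℝ)^((n:ℝ) + ((q:ℕ):ℝ)*(t:ℕ) + x*(k*t)) := by
        rw [e1, e2, e3, ← Real.rpow_add two_pos, ← Real.rpow_add two_pos]
        congr 2
        push_cast
        ring
    _ ≤ ((k:ℝ)+1) * (2:ℝ)^(-((n : ℝ) * (δ * t - 1)) + x*(((k+1)*t : ℕ):ℝ)) := by
        refine mul_le_mul_of_nonneg_left
          (Real.rpow_le_rpow_of_exponent_le one_le_two ?_) (by positivity)
        have hk1 : ((k:ℝ)+1) ≠ 0 := by positivity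
        have h1 : ((q:ℕ):ℝ)*(t:ℕ) ≤ ((n:ℝ)/((k:ℝ)+1))*(t:ℕ) :=
          mul_le_mul_of_nonneg_right hq (Nat.cast_nonneg t)
        have h2' : ((n:ℝ)/((k:ℝ)+1))*((k:ℝ)+1) = n := by field_simp
        have hx : x*((k+1)*t : ℕ) - x*((k*t : ℕ)) = δ*n*t + ((n:ℝ)/((k:ℝ)+1))*t := by
          push_cast
          rw [hxdef]
          field_simp
          ring
        push_cast at hx ⊢
        nlinarith [h1]
    _ = ((k : ℝ) + 1) * (2 : ℝ) ^ (-((n : ℝ) * (δ * t - 1))) * (A.card:ℝ)^((k+1)*t) := by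
        rw [e3, Real.rpow_add two_pos, ← mul_assoc]
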